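/- arXiv:1301.1672 — 2 statements merged into one kernel-verified Lean document; each statement's English description precedes it below -/
import Mathlib

section
/- The position consisting of a single mark in the center cell (1,1) is a P-position: after the first player opens in the center of the 3×3 board, the player then to move (the second player) loses with best play. -/
/-- A cell of the 3×3 board. -/
abbrev Cell : Type := Fin 3 × Fin 3

/-- The 8 winning lines: 3 rows, 3 columns, 2 main diagonals. -/
def notaktoLines : List (Finset Cell) :=
  [ {(0,0), (0,1), (0,2)}, {(1,0), (1,1), (1,2)}, {(2,0), (2,1), (2,2)},
    {(0,0), (1,0), (2,0)}, {(0,1), (1,1), (2,1)}, {(0,2), (1,2), (2,2)},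
    {(0,0), (1,1), (2,2)}, {(0,2), (1,1), (2,0)} ]

/-- A position is dead if it contains all three cells of some line. -/
def Dead (p : Finset Cell) : Prop := ∃ l ∈ notaktoLines, l ⊆ p

/-- `FirstWins p` means the player to move from position `p` has a winning
strategy in misère X-only tic-tac-toe: there is a move to an unmarked cell
that does not complete a line (a move completing a line loses immediately)
and after which the opponent, now to move, has no winning strategy. -/
def FirstWins (p : Finset Cell) : Prop :=
  ∃ x, ∃ _hx : x ∉ p, ¬ Dead (insert x p) ∧ ¬ FirstWins (insert x p)
termination_by 9 - p.card
decreasing_by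
  have h1 : (insert x p).card = p.card + 1 := Finset.card_insert_of_notMem _hx
  have h2 : (insert x p).card ≤ 9 := by
    simpa using Finset.card_le_univ (insert x p)
  omega


instance deadDec : DecidablePred Dead := fun p => by
  unfold Dead; infer_instance

/-- Fuel-based decision procedure for `FirstWins`. -/
def fwB : Nat → Finset Cell → Bool
  | 0, _ => false
  | n+1, p => decide (∃ x, x ∉ p ∧ ¬ Dead (insert x p) ∧ fwB n (insert x p) = false)

lemma card_cell : Fintype.card Cell = 9 := by decide

lemma fwB_correct : ∀ (n : ℕ) (p : Finset Cell), 9 - p.card ≤ n →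
    (FirstWins p ↔ fwB n p = true) := by
  intro n
  induction n with
  | zero =>
    intro p hp
    have hle : p.card ≤ 9 := by
      have := Finset.card_le_univ p
      simpa [card_cell] using this
    have hcard : p.card = 9 := by omega
    have huniv : p = Finset.univ := Finset.eq_univ_of_card p (by rw [hcard, card_cell])
    constructor
    · intro h
      rw [FirstWins] at h
      obtain ⟨x, hx, _⟩ := h
      exact absurd (by simp [huniv]) hx
    · intro h; simp [fwB] at h
  | succ n ih =>
    intro p hp
    have hstep : ∀ x : Cell, x ∉ p →
        (FirstWins (insert x p) ↔ fwB n (insert x p) = true) := by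
      intro x hx
      apply ih
      have h1 : (insert x p).card = p.card + 1 := Finset.card_insert_of_notMem hx
      omega
    rw [FirstWins]
    simp only [fwB, decide_eq_true_iff]
    constructor
    · rintro ⟨x, hx, hd, hw⟩
      refine ⟨x, hx, hd, ?_⟩
      rw [Bool.eq_false_iff, Ne, ← hstep x hx]
      exact hw
    · rintro ⟨x, hx, hd, hw⟩
      refine ⟨x, hx, hd, ?_⟩
      rw [hstep x hx, hw]
      simp

set_option maxHeartbeats 4000000 in
/-- The single center mark is a P-position: after a first move in the
center cell (1,1), the player then to move loses with best play. -/
theorem center_opening_P_position :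
    ¬ Dead ({((1 : Fin 3), (1 : Fin 3))} : Finset Cell) ∧
      ¬ FirstWins ({((1 : Fin 3), (1 : Fin 3))} : Finset Cell) := by
  constructor
  · decide
  · rw [fwB_correct 9 _ (by simp)]
    decide
end

section
/- The diametrically-opposite reply refutes a non-center opening: for every cell x of the 3×3 board with x ≠ (1,1), letting x' denote the image of x under 180-degree rotation of the board about the center (so x' = (2,2) - x coordinatewise), the two-mark position {x, x'} is a P-position. -/
instance : DecidablePred Dead := fun p => by unfold Dead; infer_instance

def firstWinsB : Nat → Finset Cell → Bool
  | 0, _ => false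
  | n+1, p => decide (∃ x : Cell, x ∉ p ∧ ¬ Dead (insert x p) ∧ firstWinsB n (insert x p) = false)

theorem firstWins_iff : ∀ n p, 9 - p.card ≤ n → (FirstWins p ↔ firstWinsB n p = true) := by
  intro n
  induction n with
  | zero =>
    intro p hp
    have hcard : p.card ≤ 9 := by simpa using Finset.card_le_univ p
    have hcard9 : p.card = 9 := by omega
    have hpu : p = Finset.univ := Finset.eq_univ_of_card p (by simpa using hcard9)
    simp [firstWinsB]
    rw [FirstWins]
    rintro ⟨x, hx, -⟩
    exact hx (hpu ▸ Finset.mem_univ x)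
  | succ n ih =>
    intro p hp
    rw [FirstWins]
    simp only [firstWinsB, decide_eq_true_eq]
    constructor
    · rintro ⟨x, hx, hd, hw⟩
      refine ⟨x, hx, hd, ?_⟩
      have hc : (insert x p).card = p.card + 1 := Finset.card_insert_of_notMem hx
      have := ih (insert x p) (by omega)
      simpa [this] using hw
    · rintro ⟨x, hx, hd, hw⟩
      refine ⟨x, hx, hd, ?_⟩
      have hc : (insert x p).card = p.card + 1 := Finset.card_insert_of_notMem hx
      have := ih (insert x p) (by omega)
      simp [this, hw]

theorem key : ∀ x : Cell, x ≠ (1, 1) →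
    ¬ Dead ({x, (2 - x.1, 2 - x.2)} : Finset Cell) ∧
      firstWinsB 9 ({x, (2 - x.1, 2 - x.2)} : Finset Cell) = false := by decide

/-- The diametrically-opposite reply refutes a non-center opening: for every
cell x ≠ (1,1), with x' its image under 180-degree rotation about the center
(x' = (2,2) - x coordinatewise), the position {x, x'} is a P-position. -/
theorem opposite_reply_P_position :
    ∀ x : Cell, x ≠ (1, 1) →
      ¬ Dead ({x, (2 - x.1, 2 - x.2)} : Finset Cell) ∧
        ¬ FirstWins ({x, (2 - x.1, 2 - x.2)} : Finset Cell) := by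
  intro x hx
  have h := firstWins_iff 9 ({x, (2 - x.1, 2 - x.2)} : Finset Cell) (by
    have : ({x, (2 - x.1, 2 - x.2)} : Finset Cell).card ≤ 9 := by
      simpa using Finset.card_le_univ ({x, (2 - x.1, 2 - x.2)} : Finset Cell)
    omega)
  obtain ⟨h1, h2⟩ := key x hx
  exact ⟨h1, by simp [h, h2]⟩
end
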